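/- arXiv:1209.1074 — 5 statements merged into one kernel-verified Lean document; each statement's English description precedes it below -/
import Mathlib

section
/- (Transverse implies close) Let G be a group with finite generating set S, and let H_i and H_j be finitely generated subgroups of G. Let {U_i, V_i} be an H_i-wall and {U_j, V_j} an H_j-wall. Then there exists D such that for all g, g' ∈ G: if the walls g{U_i, V_i} and g'{U_j, V_j} are transverse (all four intersections gU_i ∩ g'U_j, gU_i ∩ g'V_j, gV_i ∩ g'U_j, gV_i ∩ g'V_j are nonempty), then d_S(gH_i, g'H_j) < D, i.e., there exist h ∈ H_i and h' ∈ H_j with (gh)⁻¹(g'h') a product of fewer than D elements of S ∪ S⁻¹. -/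
open Pointwise

/-- `g` is a product of fewer than `D` elements of `S ∪ S⁻¹`. -/
def HasWordLengthLT {G : Type*} [Group G] (S : Set G) (g : G) (D : ℝ) : Prop :=
  ∃ l : List G, (∀ a ∈ l, a ∈ S ∨ a⁻¹ ∈ S) ∧ l.prod = g ∧ (l.length : ℝ) < D

/-- Subsets `A`, `B` of `G` are `D`-close with respect to the generating set `S`. -/
def DClose {G : Type*} [Group G] (S : Set G) (D : ℝ) (A B : Set G) : Prop :=
  ∃ a ∈ A, ∃ b ∈ B, HasWordLengthLT S (a⁻¹ * b) D

/-- `H` has bounded packing in `G` (with respect to the generating set `S`): for each `D > 0`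
there exists `k` such that every collection of pairwise `D`-close left cosets of `H` has
cardinality at most `k`. -/
def BoundedPacking {G : Type*} [Group G] (S : Set G) (H : Subgroup G) : Prop :=
  ∀ D : ℝ, 0 < D → ∃ k : ℕ, ∀ C : Set (Set G),
    (∀ A ∈ C, ∃ g : G, A = g • (H : Set G)) →
    C.Pairwise (DClose S D) → C.Finite ∧ C.ncard ≤ k

/-- The frontier of `A ⊆ G` with respect to the finite generating set `S`. -/
def frontierIn {G : Type*} [Group G] (S : Finset G) (A : Set G) : Set G :=
  {a : G | a ∈ A ∧ ∃ s : G, (s ∈ S ∨ s⁻¹ ∈ S) ∧ a * s ∉ A}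

/-- `A` is `H`-finite: `A ⊆ H · F` for some finite `F`. -/
def HSetFinite {G : Type*} [Group G] (H : Set G) (A : Set G) : Prop :=
  ∃ F : Finset G, A ⊆ H * (F : Set G)

/-- An `H`-wall `{U, V}` in `G`: the halfspaces cover `G`, the pair is `H`-invariant,
`U ∩ V` is `H`-finite, and `U` and `V` have `Ḧ`-finite frontiers, where
`Ḧ = {h ∈ H : hU = U ∧ hV = V}`. -/
structure IsHWall {G : Type*} [Group G] (S : Finset G) (H : Subgroup G)
    (U V : Set G) : Prop where
  cover : U ∪ V = Set.univ
  invar : ∀ h ∈ H, (h • U = U ∧ h • V = V) ∨ (h • U = V ∧ h • V = U)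
  inter_hfinite : HSetFinite (H : Set G) (U ∩ V)
  frontierU : HSetFinite {h : G | h ∈ H ∧ h • U = U ∧ h • V = V} (frontierIn S U)
  frontierV : HSetFinite {h : G | h ∈ H ∧ h • U = U ∧ h • V = V} (frontierIn S V)


namespace TIC
variable {G : Type*} [Group G]

/-- inverse word -/
def invW (l : List G) : List G := (l.map fun x => x⁻¹).reverse

lemma invW_prod (l : List G) : (invW l).prod = l.prod⁻¹ := (List.prod_inv_reverse l).symm

lemma invW_length (l : List G) : (invW l).length = l.length := by simp [invW]

lemma invW_word {S : Finset G} {l : List G} (h : ∀ a ∈ l, a ∈ S ∨ a⁻¹ ∈ S) :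
    ∀ a ∈ invW l, a ∈ S ∨ a⁻¹ ∈ S := by
  intro a ha
  simp only [invW, List.mem_reverse, List.mem_map] at ha
  obtain ⟨b, hb, rfl⟩ := ha
  rcases h b hb with h' | h'
  · exact Or.inr (by simpa using h')
  · exact Or.inl h'

/-- Along a word path which starts in `P` and ends outside `P`, there is a crossing. -/
lemma exitNear (S : Finset G) (P : Set G) :
    ∀ (l : List G) (x : G), (∀ a ∈ l, a ∈ S ∨ a⁻¹ ∈ S) → x ∈ P → x * l.prod ∉ P →
    ∃ l₁ s l₂, l = l₁ ++ s :: l₂ ∧ x * l₁.prod ∈ P ∧ x * l₁.prod * s ∉ P := by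
  intro l
  induction l with
  | nil => intro x _ hx hx'; simp only [List.prod_nil, mul_one] at hx'; exact absurd hx hx'
  | cons a l ih =>
    intro x hword hx hx'
    by_cases h : x * a ∈ P
    · obtain ⟨l₁, s, l₂, he, h1, h2⟩ := ih (x * a)
        (fun b hb => hword b (List.mem_cons_of_mem _ hb)) h
        (by rwa [List.prod_cons, ← mul_assoc] at hx')
      exact ⟨a :: l₁, s, l₂, by rw [he]; rfl, by rwa [List.prod_cons, ← mul_assoc],
        by rwa [List.prod_cons, ← mul_assoc]⟩
    · exact ⟨[], a, l, rfl, by simpa using hx, by simpa using h⟩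

lemma frontier_smul_subset (S : Finset G) (t : G) (Y B₀ : Set G)
    (h : frontierIn S Y ⊆ B₀) : frontierIn S (t • Y) ⊆ t • B₀ := by
  rintro z ⟨hz, s, hs, hzs⟩
  have hz' : t⁻¹ * z ∈ Y := by
    rwa [Set.mem_smul_set_iff_inv_smul_mem, smul_eq_mul] at hz
  have hzs' : (t⁻¹ * z) * s ∉ Y := by
    intro hc
    exact hzs (by rw [Set.mem_smul_set_iff_inv_smul_mem, smul_eq_mul, ← mul_assoc]; exact hc)
  have : t⁻¹ * z ∈ frontierIn S Y := ⟨hz', s, hs, hzs'⟩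
  exact ⟨t⁻¹ * z, h this, by simp⟩

/-- Crossing lemma for two "nested" pairs of halfspaces. -/
lemma cross_meet (S : Finset G) (w : G → List G)
    (hw1 : ∀ g : G, ∀ a ∈ w g, a ∈ S ∨ a⁻¹ ∈ S) (hw2 : ∀ g : G, (w g).prod = g)
    (X X' Y Y' A B : Set G)
    (hfX : frontierIn S X ⊆ A) (hXX' : X ∩ X' ⊆ A)
    (hfY : frontierIn S Y ⊆ B) (hYY' : Y ∩ Y' ⊆ B)
    (hAY : A ⊆ Y) (hBX : B ⊆ X)
    (a b : G) (ha : a ∈ X' ∩ Y') (hb : b ∈ X ∪ Y) : (A ∩ B).Nonempty := by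
  by_cases haX : a ∈ X
  · have h1 : a ∈ A := hXX' ⟨haX, ha.1⟩
    exact ⟨a, h1, hYY' ⟨hAY h1, ha.2⟩⟩
  by_cases haY : a ∈ Y
  · have h2 : a ∈ B := hYY' ⟨haY, ha.2⟩
    exact ⟨a, hXX' ⟨hBX h2, ha.1⟩, h2⟩
  · obtain ⟨l₁, s, l₂, he, h1, h2⟩ := exitNear S (X ∪ Y)ᶜ (w (a⁻¹ * b)) a
      (hw1 _) (by simp [haX, haY]) (by rw [hw2]; intro hc; rw [Set.mem_compl_iff] at hc; exact hc (by simpa using hb))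
    set z := a * l₁.prod with hz
    have hzX : z ∉ X := fun h => h1 (Or.inl h)
    have hzY : z ∉ Y := fun h => h1 (Or.inr h)
    have hu : z * s ∈ X ∪ Y := by by_contra hc; exact h2 (Set.mem_compl hc)
    have hs : s ∈ S ∨ s⁻¹ ∈ S := hw1 (a⁻¹ * b) s (by rw [he]; simp)
    have hs' : s⁻¹ ∈ S ∨ (s⁻¹)⁻¹ ∈ S := by rw [inv_inv]; exact hs.symm
    have hback : z * s * s⁻¹ = z := by group
    rcases hu with hu | hu
    · have hA : z * s ∈ A := hfX ⟨hu, s⁻¹, hs', by rwa [hback]⟩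
      have hB : z * s ∈ B := hfY ⟨hAY hA, s⁻¹, hs', by rwa [hback]⟩
      exact ⟨z * s, hA, hB⟩
    · have hB : z * s ∈ B := hfY ⟨hu, s⁻¹, hs', by rwa [hback]⟩
      have hA : z * s ∈ A := hfX ⟨hBX hB, s⁻¹, hs', by rwa [hback]⟩
      exact ⟨z * s, hA, hB⟩

lemma word_of_gen {S : Finset G} (w : G → List G)
    (hw1 : ∀ g : G, ∀ a ∈ w g, a ∈ S ∨ a⁻¹ ∈ S) (hw2 : ∀ g : G, (w g).prod = g)
    (T : Finset G) {a : G} (ha : a ∈ T ∨ a⁻¹ ∈ T) :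
    ∃ la : List G, (∀ b ∈ la, b ∈ S ∨ b⁻¹ ∈ S) ∧ la.prod = a ∧
      la.length ≤ T.sup fun x => (w x).length := by
  rcases ha with ha | ha
  · exact ⟨w a, hw1 a, hw2 a, Finset.le_sup (f := fun x => (w x).length) ha⟩
  · exact ⟨invW (w a⁻¹), invW_word (hw1 _), by rw [invW_prod, hw2, inv_inv],
      by rw [invW_length]; exact Finset.le_sup (f := fun x => (w x).length) ha⟩

lemma list_of_mem_closure {T : Finset G} {K : Subgroup G}
    (hT : Subgroup.closure (T : Set G) = K) {g : G} (hg : g ∈ K) :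
    ∃ l : List G, (∀ a ∈ l, a ∈ T ∨ a⁻¹ ∈ T) ∧ l.prod = g := by
  have h2 : g ∈ Submonoid.closure ((T : Set G) ∪ (T : Set G)⁻¹) := by
    rw [← Subgroup.closure_toSubmonoid]
    rw [hT]; exact hg
  obtain ⟨l, hl, hp⟩ := Submonoid.exists_list_of_mem_closure h2
  exact ⟨l, fun a ha => by
    rcases hl a ha with h | h
    · exact Or.inl h
    · exact Or.inr (Set.mem_inv.mp h), hp⟩

/-- **Straddle lemma**: if `K·F₀` has points on both sides of `P`, then some point of the
frontier of `P` is boundedly close to `K`. -/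
lemma straddle (S : Finset G) (w : G → List G)
    (hw1 : ∀ g : G, ∀ a ∈ w g, a ∈ S ∨ a⁻¹ ∈ S) (hw2 : ∀ g : G, (w g).prod = g)
    (K : Subgroup G) (T : Finset G) (hT : Subgroup.closure (T : Set G) = K)
    (F₀ : Finset G) (P : Set G) (u v : G)
    (hu : u ∈ (K : Set G) * (F₀ : Set G)) (hv : v ∈ (K : Set G) * (F₀ : Set G))
    (hup : u ∈ P) (hvp : v ∉ P) :
    ∃ k ∈ K, ∃ z s, z ∈ P ∧ (s ∈ S ∨ s⁻¹ ∈ S) ∧ z * s ∉ P ∧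
      ∃ l : List G, (∀ a ∈ l, a ∈ S ∨ a⁻¹ ∈ S) ∧ l.prod = k⁻¹ * z ∧
        l.length ≤ 3 * (F₀.sup fun f => (w f).length) + (T.sup fun x => (w x).length) := by
  set NF := F₀.sup fun f => (w f).length with hNF
  set NT := T.sup fun x => (w x).length with hNT
  have hlen : ∀ f ∈ F₀, (w f).length ≤ NF := fun f hf =>
    Finset.le_sup (f := fun x => (w x).length) hf
  obtain ⟨k₁, hk₁, f₁, hf₁, rfl⟩ := hu
  obtain ⟨k₂, hk₂, f₂, hf₂, rfl⟩ := hv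
  rw [Finset.mem_coe] at hf₁ hf₂
  rw [SetLike.mem_coe] at hk₁ hk₂
  have main : ∀ lT : List G, (∀ a ∈ lT, a ∈ T ∨ a⁻¹ ∈ T) → ∀ k₁ : G, k₁ ∈ K →
      ∀ f₁, f₁ ∈ F₀ → k₁ * f₁ ∈ P → k₁ * lT.prod * f₂ ∉ P →
      ∃ k ∈ K, ∃ z s, z ∈ P ∧ (s ∈ S ∨ s⁻¹ ∈ S) ∧ z * s ∉ P ∧
        ∃ l : List G, (∀ a ∈ l, a ∈ S ∨ a⁻¹ ∈ S) ∧ l.prod = k⁻¹ * z ∧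
          l.length ≤ 3 * NF + NT := by
    intro lT
    induction lT with
    | nil =>
      intro _ k₁ hk₁ f₁ hf₁ hP hnP
      rw [List.prod_nil, mul_one] at hnP
      set l₀ := invW (w f₁) ++ w f₂ with hl₀
      have hl₀w : ∀ a ∈ l₀, a ∈ S ∨ a⁻¹ ∈ S := by
        intro a ha
        rcases List.mem_append.mp ha with h | h
        · exact invW_word (hw1 _) a h
        · exact hw1 _ a h
      have hl₀p : l₀.prod = f₁⁻¹ * f₂ := by
        rw [hl₀, List.prod_append, invW_prod, hw2, hw2]
      obtain ⟨l₁, s, l₂, he, h1, h2⟩ := exitNear S P l₀ (k₁ * f₁) hl₀w hP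
        (by rw [hl₀p]; rw [show k₁ * f₁ * (f₁⁻¹ * f₂) = k₁ * f₂ by group]; exact hnP)
      refine ⟨k₁, hk₁, k₁ * f₁ * l₁.prod, s, h1, hl₀w s (by rw [he]; simp), h2,
        w f₁ ++ l₁, ?_, ?_, ?_⟩
      · intro a ha
        rcases List.mem_append.mp ha with h | h
        · exact hw1 _ a h
        · exact hl₀w a (by rw [he]; exact List.mem_append_left _ h)
      · rw [List.prod_append, hw2]; group
      · have hlel : l₁.length ≤ l₀.length := by
          rw [he]; simp
        have : l₀.length ≤ 2 * NF := by
          rw [hl₀]; simp only [List.length_append, invW_length]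
          have := hlen f₁ hf₁; have := hlen f₂ hf₂; omega
        simp only [List.length_append]
        have := hlen f₁ hf₁; omega
    | cons a lT ih =>
      intro hword k₁ hk₁ f₁ hf₁ hP hnP
      have haK : a ∈ K := by
        rcases hword a (List.mem_cons_self (a := a) (l := lT)) with h | h
        · rw [← hT]; exact Subgroup.subset_closure h
        · have : a⁻¹ ∈ K := by rw [← hT]; exact Subgroup.subset_closure h
          simpa using K.inv_mem this
      by_cases h : (k₁ * a) * f₁ ∈ P
      · refine ih (fun b hb => hword b (List.mem_cons_of_mem _ hb)) (k₁ * a)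
          (K.mul_mem hk₁ haK) f₁ hf₁ h ?_
        rw [List.prod_cons] at hnP
        rw [show k₁ * a * lT.prod * f₂ = k₁ * (a * lT.prod) * f₂ by group]
        exact hnP
      · obtain ⟨la, hlaw, hlap, hlal⟩ := word_of_gen w hw1 hw2 T
          (hword a (List.mem_cons_self (a := a) (l := lT)))
        set l₀ := invW (w f₁) ++ la ++ w f₁ with hl₀
        have hl₀w : ∀ b ∈ l₀, b ∈ S ∨ b⁻¹ ∈ S := by
          intro b hb
          rcases List.mem_append.mp hb with hb | hb
          · rcases List.mem_append.mp hb with hb | hb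
            · exact invW_word (hw1 _) b hb
            · exact hlaw b hb
          · exact hw1 _ b hb
        have hl₀p : l₀.prod = f₁⁻¹ * a * f₁ := by
          rw [hl₀, List.prod_append, List.prod_append, invW_prod, hw2, hlap]
        obtain ⟨l₁, s, l₂, he, h1, h2⟩ := exitNear S P l₀ (k₁ * f₁) hl₀w hP
          (by rw [hl₀p, show k₁ * f₁ * (f₁⁻¹ * a * f₁) = k₁ * a * f₁ by group]; exact h)
        refine ⟨k₁, hk₁, k₁ * f₁ * l₁.prod, s, h1, hl₀w s (by rw [he]; simp), h2,
          w f₁ ++ l₁, ?_, ?_, ?_⟩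
        · intro b hb
          rcases List.mem_append.mp hb with h' | h'
          · exact hw1 _ b h'
          · exact hl₀w b (by rw [he]; exact List.mem_append_left _ h')
        · rw [List.prod_append, hw2]; group
        · have hlel : l₁.length ≤ l₀.length := by rw [he]; simp
          have : l₀.length ≤ 2 * NF + NT := by
            rw [hl₀]; simp only [List.length_append, invW_length]
            have := hlen f₁ hf₁; omega
          simp only [List.length_append]
          have := hlen f₁ hf₁; omega
  obtain ⟨lT, hlT, hlTp⟩ := list_of_mem_closure hT (K.mul_mem (K.inv_mem hk₁) hk₂)
  exact main lT hlT k₁ hk₁ f₁ hf₁ hup (by rw [hlTp, show k₁ * (k₁⁻¹ * k₂) * f₂ = k₂ * f₂ by group]; exact hvp)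

end TIC

/-- **Transverse implies close.**  Let `G` be a group with finite generating set `S`, and
let `Hi`, `Hj` be finitely generated subgroups with chosen `Hi`-wall `{Ui, Vi}` and
`Hj`-wall `{Uj, Vj}`.  Then there exists `D` such that whenever the translated walls
`g{Ui, Vi}` and `g'{Uj, Vj}` are transverse, the cosets `g·Hi` and `g'·Hj` are at
`S`-distance less than `D`. -/
theorem transverse_implies_close
    {G : Type*} [Group G]
    (S : Finset G) (hS : Subgroup.closure (S : Set G) = ⊤)
    (Hi Hj : Subgroup G) (hfgi : Hi.FG) (hfgj : Hj.FG)
    (Ui Vi Uj Vj : Set G)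
    (hwi : IsHWall S Hi Ui Vi) (hwj : IsHWall S Hj Uj Vj) :
    ∃ D : ℕ, ∀ g g' : G,
      ((g • Ui) ∩ (g' • Uj)).Nonempty → ((g • Ui) ∩ (g' • Vj)).Nonempty →
      ((g • Vi) ∩ (g' • Uj)).Nonempty → ((g • Vi) ∩ (g' • Vj)).Nonempty →
      ∃ h ∈ Hi, ∃ h' ∈ Hj, ∃ l : List G,
        (∀ a ∈ l, a ∈ S ∨ a⁻¹ ∈ S) ∧ l.prod = (g * h)⁻¹ * (g' * h') ∧ l.length < D := by
  classical
  obtain ⟨T, hT⟩ := hfgi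
  obtain ⟨T', hT'⟩ := hfgj
  have hword : ∀ g : G, ∃ l : List G, (∀ a ∈ l, a ∈ S ∨ a⁻¹ ∈ S) ∧ l.prod = g :=
    fun g => TIC.list_of_mem_closure hS (by rw [hS] at *; exact Subgroup.mem_top g)
  choose w hw1 hw2 using hword
  obtain ⟨F1, hF1⟩ := hwi.inter_hfinite
  obtain ⟨F2, hF2⟩ := hwi.frontierU
  obtain ⟨F3, hF3⟩ := hwi.frontierV
  obtain ⟨F1', hG1⟩ := hwj.inter_hfinite
  obtain ⟨F2', hG2⟩ := hwj.frontierU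
  obtain ⟨F3', hG3⟩ := hwj.frontierV
  set F : Finset G := F1 ∪ F2 ∪ F3 with hFdef
  set F' : Finset G := F1' ∪ F2' ∪ F3' with hF'def
  set A : Set G := (Hi : Set G) * (F : Set G) with hAdef
  set BB : Set G := (Hj : Set G) * (F' : Set G) with hBBdef
  have hA_int : Ui ∩ Vi ⊆ A := hF1.trans (Set.mul_subset_mul subset_rfl
    (by exact_mod_cast Finset.subset_union_left.trans (Finset.subset_union_left (s₂ := F3))))
  have hA_fU : frontierIn S Ui ⊆ A := hF2.trans (Set.mul_subset_mul (fun x hx => hx.1)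
    (by exact_mod_cast Finset.subset_union_right.trans (Finset.subset_union_left (s₂ := F3))))
  have hA_fV : frontierIn S Vi ⊆ A := hF3.trans (Set.mul_subset_mul (fun x hx => hx.1)
    (by exact_mod_cast Finset.subset_union_right (s₁ := F1 ∪ F2)))
  have hB_int : Uj ∩ Vj ⊆ BB := hG1.trans (Set.mul_subset_mul subset_rfl
    (by exact_mod_cast Finset.subset_union_left.trans (Finset.subset_union_left (s₂ := F3'))))
  have hB_fU : frontierIn S Uj ⊆ BB := hG2.trans (Set.mul_subset_mul (fun x hx => hx.1)
    (by exact_mod_cast Finset.subset_union_right.trans (Finset.subset_union_left (s₂ := F3'))))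
  have hB_fV : frontierIn S Vj ⊆ BB := hG3.trans (Set.mul_subset_mul (fun x hx => hx.1)
    (by exact_mod_cast Finset.subset_union_right (s₁ := F1' ∪ F2')))
  set NF := F.sup fun f => (w f).length with hNF
  set NF' := F'.sup fun f => (w f).length with hNF'
  set NT := T.sup fun x => (w x).length with hNT
  set NT' := T'.sup fun x => (w x).length with hNT'
  refine ⟨4*NF + 4*NF' + NT + NT' + 1, ?_⟩
  intro g g' h1 h2 h3 h4
  set t := g⁻¹ * g' with htdef
  have corner : ∀ (Zi Zj : Set G), ((g • Zi) ∩ (g' • Zj)).Nonempty →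
      ∃ y, y ∈ Zi ∧ y ∈ t • Zj := by
    rintro Zi Zj ⟨x, hxi, hxj⟩
    refine ⟨g⁻¹ * x, ?_, ?_⟩
    · have := Set.mem_smul_set_iff_inv_smul_mem.mp hxi
      rwa [smul_eq_mul] at this
    · rw [Set.mem_smul_set_iff_inv_smul_mem, smul_eq_mul, htdef,
        show (g⁻¹ * g')⁻¹ * (g⁻¹ * x) = g'⁻¹ * x by group]
      have := Set.mem_smul_set_iff_inv_smul_mem.mp hxj
      rwa [smul_eq_mul] at this
  obtain ⟨aUU, haUU1, haUU2⟩ := corner Ui Uj h1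
  obtain ⟨aUV, haUV1, haUV2⟩ := corner Ui Vj h2
  obtain ⟨aVU, haVU1, haVU2⟩ := corner Vi Uj h3
  obtain ⟨aVV, haVV1, haVV2⟩ := corner Vi Vj h4
  set B : Set G := t • BB with hBdef
  have hB_fU' : frontierIn S (t • Uj) ⊆ B := TIC.frontier_smul_subset S t Uj _ hB_fU
  have hB_fV' : frontierIn S (t • Vj) ⊆ B := TIC.frontier_smul_subset S t Vj _ hB_fV
  have hB_int' : (t • Uj) ∩ (t • Vj) ⊆ B := by
    rw [← Set.smul_set_inter]; exact Set.smul_set_mono hB_int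
  have hcov_j : ∀ x : G, x ∉ t • Uj → x ∈ t • Vj := by
    intro x hx
    have hcov : (t • Uj) ∪ (t • Vj) = Set.univ := by
      rw [← Set.smul_set_union, hwj.cover, Set.smul_set_univ]
    have hx2 : x ∈ (t • Uj) ∪ (t • Vj) := by rw [hcov]; trivial
    rcases hx2 with h | h
    · exact absurd h hx
    · exact h
  have hcov_i : ∀ x : G, x ∉ Ui → x ∈ Vi := by
    intro x hx
    have hx2 : x ∈ Ui ∪ Vi := by rw [hwi.cover]; trivial
    rcases hx2 with h | h
    · exact absurd h hx
    · exact h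
  have package : ∀ h : G, h ∈ Hi → ∀ h' : G, h' ∈ Hj → ∀ l : List G,
      (∀ a ∈ l, a ∈ S ∨ a⁻¹ ∈ S) → l.prod = h⁻¹ * t * h' →
      l.length ≤ 4*NF + 4*NF' + NT + NT' →
      (∃ h ∈ Hi, ∃ h' ∈ Hj, ∃ l : List G, (∀ a ∈ l, a ∈ S ∨ a⁻¹ ∈ S) ∧
        l.prod = (g * h)⁻¹ * (g' * h') ∧ l.length < 4*NF + 4*NF' + NT + NT' + 1) := by
    intro h hh h' hh' l hl hp hlen
    exact ⟨h, hh, h', hh', l, hl, by rw [hp, htdef]; group, by omega⟩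
  have finish1 : (A ∩ B).Nonempty →
      (∃ h ∈ Hi, ∃ h' ∈ Hj, ∃ l : List G, (∀ a ∈ l, a ∈ S ∨ a⁻¹ ∈ S) ∧
        l.prod = (g * h)⁻¹ * (g' * h') ∧ l.length < 4*NF + 4*NF' + NT + NT' + 1) := by
    rintro ⟨p, hpA, hpB⟩
    obtain ⟨hi, hhi, f, hf, rfl⟩ := hpA
    have hmem : t⁻¹ * (hi * f) ∈ BB := by
      have := Set.mem_smul_set_iff_inv_smul_mem.mp hpB
      rwa [smul_eq_mul] at this
    obtain ⟨hj, hhj, f', hf', heq⟩ := hmem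
    replace heq : hj * f' = t⁻¹ * (hi * f) := heq
    rw [SetLike.mem_coe] at hhi hhj
    rw [Finset.mem_coe] at hf hf'
    refine package hi hhi hj hhj (w f ++ TIC.invW (w f')) ?_ ?_ ?_
    · intro a ha
      rcases List.mem_append.mp ha with h | h
      · exact hw1 _ a h
      · exact TIC.invW_word (hw1 _) a h
    · rw [List.prod_append, TIC.invW_prod, hw2, hw2]
      have h0 : t * (hj * f') = hi * f := by
        rw [heq]; group
      calc f * f'⁻¹ = hi⁻¹ * (hi * f) * f'⁻¹ := by group
        _ = hi⁻¹ * (t * (hj * f')) * f'⁻¹ := by rw [h0]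
        _ = hi⁻¹ * t * hj := by group
    · have l1 : (w f).length ≤ NF := Finset.le_sup (f := fun x => (w x).length) hf
      have l2 : (w f').length ≤ NF' := Finset.le_sup (f := fun x => (w x).length) hf'
      simp only [List.length_append, TIC.invW_length]
      omega
  have finish2 : ∀ u v : G, u ∈ A → u ∈ t • Uj → v ∈ A → v ∉ t • Uj →
      (∃ h ∈ Hi, ∃ h' ∈ Hj, ∃ l : List G, (∀ a ∈ l, a ∈ S ∨ a⁻¹ ∈ S) ∧
        l.prod = (g * h)⁻¹ * (g' * h') ∧ l.length < 4*NF + 4*NF' + NT + NT' + 1) := by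
    intro u v huA huU hvA hvU
    obtain ⟨k, hk, z, s, hz, hs, hzs, l, hlw, hlp, hll⟩ :=
      TIC.straddle S w hw1 hw2 Hi T hT F (t • Uj) u v huA hvA huU hvU
    rw [← hNF, ← hNT] at hll
    have hzB : z ∈ B := hB_fU' ⟨hz, s, hs, hzs⟩
    have hmem : t⁻¹ * z ∈ BB := by
      have := Set.mem_smul_set_iff_inv_smul_mem.mp hzB
      rwa [smul_eq_mul] at this
    obtain ⟨hj, hhj, f', hf', heq⟩ := hmem
    replace heq : hj * f' = t⁻¹ * z := heq
    rw [SetLike.mem_coe] at hhj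
    rw [Finset.mem_coe] at hf'
    refine package k hk hj hhj (l ++ TIC.invW (w f')) ?_ ?_ ?_
    · intro a ha
      rcases List.mem_append.mp ha with h | h
      · exact hlw a h
      · exact TIC.invW_word (hw1 _) a h
    · rw [List.prod_append, TIC.invW_prod, hw2, hlp]
      have h0 : t * (hj * f') = z := by rw [heq]; group
      calc k⁻¹ * z * f'⁻¹ = k⁻¹ * (t * (hj * f')) * f'⁻¹ := by rw [h0]
        _ = k⁻¹ * t * hj := by group
    · have l2 : (w f').length ≤ NF' := Finset.le_sup (f := fun x => (w x).length) hf'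
      simp only [List.length_append, TIC.invW_length]
      omega
  have finish3 : ∀ u v : G, u ∈ B → u ∈ Ui → v ∈ B → v ∉ Ui →
      (∃ h ∈ Hi, ∃ h' ∈ Hj, ∃ l : List G, (∀ a ∈ l, a ∈ S ∨ a⁻¹ ∈ S) ∧
        l.prod = (g * h)⁻¹ * (g' * h') ∧ l.length < 4*NF + 4*NF' + NT + NT' + 1) := by
    intro u v huB huU hvB hvU
    have hu' : t⁻¹ * u ∈ BB := by
      have := Set.mem_smul_set_iff_inv_smul_mem.mp huB
      rwa [smul_eq_mul] at this
    have hv' : t⁻¹ * v ∈ BB := by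
      have := Set.mem_smul_set_iff_inv_smul_mem.mp hvB
      rwa [smul_eq_mul] at this
    have hmemiff : ∀ x : G, x ∈ t⁻¹ • Ui ↔ t * x ∈ Ui := by
      intro x
      rw [Set.mem_smul_set_iff_inv_smul_mem, smul_eq_mul, inv_inv]
    have huP : t⁻¹ * u ∈ t⁻¹ • Ui := by
      rw [hmemiff, show t * (t⁻¹ * u) = u by group]; exact huU
    have hvP : t⁻¹ * v ∉ t⁻¹ • Ui := by
      rw [hmemiff, show t * (t⁻¹ * v) = v by group]; exact hvU
    obtain ⟨k, hk, z, s, hz, hs, hzs, l, hlw, hlp, hll⟩ :=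
      TIC.straddle S w hw1 hw2 Hj T' hT' F' (t⁻¹ • Ui) (t⁻¹ * u) (t⁻¹ * v) hu' hv' huP hvP
    rw [← hNF', ← hNT'] at hll
    have hzU : t * z ∈ Ui := (hmemiff z).mp hz
    have hzsU : (t * z) * s ∉ Ui := by
      intro hc
      exact hzs ((hmemiff (z * s)).mpr (by rwa [← mul_assoc]))
    have hfr : t * z ∈ A := hA_fU ⟨hzU, s, hs, hzsU⟩
    obtain ⟨hi, hhi, f, hf, heq⟩ := hfr
    replace heq : hi * f = t * z := heq
    rw [SetLike.mem_coe] at hhi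
    rw [Finset.mem_coe] at hf
    refine package hi hhi k hk (w f ++ TIC.invW l) ?_ ?_ ?_
    · intro a ha
      rcases List.mem_append.mp ha with h | h
      · exact hw1 _ a h
      · exact TIC.invW_word hlw a h
    · rw [List.prod_append, TIC.invW_prod, hw2, hlp]
      calc f * (k⁻¹ * z)⁻¹ = hi⁻¹ * (hi * f) * z⁻¹ * k := by group
        _ = hi⁻¹ * (t * z) * z⁻¹ * k := by rw [heq]
        _ = hi⁻¹ * t * k := by group
    · have l1 : (w f).length ≤ NF := Finset.le_sup (f := fun x => (w x).length) hf
      simp only [List.length_append, TIC.invW_length]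
      omega
  by_cases hA1 : A ⊆ t • Uj
  · by_cases hB1 : B ⊆ Ui
    · exact finish1 (TIC.cross_meet S w hw1 hw2 Ui Vi (t • Uj) (t • Vj) A B
        hA_fU hA_int hB_fU' hB_int' hA1 hB1 aVV aUU ⟨haVV1, haVV2⟩ (Or.inl haUU1))
    · obtain ⟨v', hv'B, hv'U⟩ := Set.not_subset.mp hB1
      by_cases hB2 : ∃ u' ∈ B, u' ∈ Ui
      · obtain ⟨u', hu'B, hu'U⟩ := hB2
        exact finish3 u' v' hu'B hu'U hv'B hv'U
      · have hBV : B ⊆ Vi := fun x hx => hcov_i x (fun hc => hB2 ⟨x, hx, hc⟩)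
        exact finish1 (TIC.cross_meet S w hw1 hw2 Vi Ui (t • Uj) (t • Vj) A B
          hA_fV (by rw [Set.inter_comm]; exact hA_int) hB_fU' hB_int' hA1 hBV
          aUV aVU ⟨haUV1, haUV2⟩ (Or.inl haVU1))
  · obtain ⟨v, hvA, hvU⟩ := Set.not_subset.mp hA1
    by_cases hA2 : ∃ u ∈ A, u ∈ t • Uj
    · obtain ⟨u, huA, huU⟩ := hA2
      exact finish2 u v huA huU hvA hvU
    · have hAV : A ⊆ t • Vj := fun x hx => hcov_j x (fun hc => hA2 ⟨x, hx, hc⟩)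
      by_cases hB1 : B ⊆ Ui
      · exact finish1 (TIC.cross_meet S w hw1 hw2 Ui Vi (t • Vj) (t • Uj) A B
          hA_fU hA_int hB_fV' (by rw [Set.inter_comm]; exact hB_int') hAV hB1
          aVU aUV ⟨haVU1, haVU2⟩ (Or.inl haUV1))
      · obtain ⟨v', hv'B, hv'U⟩ := Set.not_subset.mp hB1
        by_cases hB2 : ∃ u' ∈ B, u' ∈ Ui
        · obtain ⟨u', hu'B, hu'U⟩ := hB2
          exact finish3 u' v' hu'B hu'U hv'B hv'U
        · have hBV : B ⊆ Vi := fun x hx => hcov_i x (fun hc => hB2 ⟨x, hx, hc⟩)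
          exact finish1 (TIC.cross_meet S w hw1 hw2 Vi Ui (t • Vj) (t • Uj) A B
            hA_fV (by rw [Set.inter_comm]; exact hA_int)
            hB_fV' (by rw [Set.inter_comm]; exact hB_int') hAV hBV
            aUU aVV ⟨haUU1, haUU2⟩ (Or.inl haVV1))
end

section
/- (Ball–Ball separation) Let X be a metric space carrying a wallspace structure W such that each ball of finite radius in X is crossed by only finitely many walls, where a wall crosses a subset S ⊆ X if S meets both of its closed halfspaces. Suppose a group G acts on X by isometries preserving the wallspace structure, the action on X is cobounded (there exist x₀ ∈ X and R₀ such that every point of X lies within distance R₀ of the orbit G·x₀), and the induced action on the dual cube complex is proper in the sense that every 0-cube has finite stabilizer in G. Then for each r > 0 there exists m such that whenever d(x₁, x₂) > m, there is a wall separating the r-neighborhood of x₁ from the r-neighborhood of x₂, i.e., these two neighborhoods lie in distinct open halfspaces of that wall. -/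
open Pointwise

/-- A wallspace on a set `X`: an indexed family of walls `W i = (U i, V i)` whose closed
halfspaces cover `X`, such that each point betwixts only finitely many walls, any two points
are separated by only finitely many walls, and there are no duplicate genuine partitions. -/
structure Wallspace (X : Type*) (ι : Type*) where
  U : ι → Set X
  V : ι → Set X
  cover : ∀ i, U i ∪ V i = Set.univ
  betwixt_finite : ∀ x : X, {i : ι | x ∈ U i ∩ V i}.Finite
  sep_finite : ∀ x y : X, {i : ι |
      (x ∈ U i \ V i ∧ y ∈ V i \ U i) ∨ (x ∈ V i \ U i ∧ y ∈ U i \ V i)}.Finite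
  no_dup_partition : ∀ i j, i ≠ j →
    ((U i = U j ∧ V i = V j) ∨ (U i = V j ∧ V i = U j)) →
    U i ∩ V i = ∅ → ¬((U i).Nonempty ∧ (V i).Nonempty)

namespace Wallspace

variable {X ι : Type*} (W : Wallspace X ι)

/-- The closed halfspace of wall `i` selected by `b` (`true ↦ U i`, `false ↦ V i`). -/
def side (i : ι) : Bool → Set X
  | true => W.U i
  | false => W.V i

/-- The open halfspace of wall `i` on the side `b`. -/
def openSide (i : ι) (b : Bool) : Set X :=
  W.side i b \ W.side i (!b)

/-- The wall `i` separates the points `x` and `y`: they lie in distinct open halfspaces. -/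
def Separates (i : ι) (x y : X) : Prop :=
  (x ∈ W.U i \ W.V i ∧ y ∈ W.V i \ W.U i) ∨
  (x ∈ W.V i \ W.U i ∧ y ∈ W.U i \ W.V i)

/-- A `0`-cube of the dual cube complex: an orientation `c` of the walls (where `c i` selects
the left halfspace `W.side i (c i)` of the wall `i`) such that any two left halfspaces meet
and every point lies in all but finitely many left halfspaces. -/
def IsZeroCube (c : ι → Bool) : Prop :=
  (∀ i j : ι, (W.side i (c i) ∩ W.side j (c j)).Nonempty) ∧
  (∀ x : X, {i : ι | x ∉ W.side i (c i)}.Finite)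

/-- Distinct walls `i ≠ j` are transverse if all four intersections of closed halfspaces
are nonempty. -/
def Transverse (i j : ι) : Prop :=
  i ≠ j ∧ (W.U i ∩ W.U j).Nonempty ∧ (W.U i ∩ W.V j).Nonempty ∧
    (W.V i ∩ W.U j).Nonempty ∧ (W.V i ∩ W.V j).Nonempty

/-- The wall `i` is reversible at the `0`-cube `c`: the orientation agreeing with `c` except
that the pair at `i` is swapped is again a `0`-cube. -/
def Reversible (c : ι → Bool) (i : ι) : Prop :=
  ∀ c' : ι → Bool, c' i = !(c i) → (∀ j, j ≠ i → c' j = c j) → W.IsZeroCube c'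

/-- The wall `i` crosses the subset `A` if `A` meets both closed halfspaces of `i`. -/
def Crosses (i : ι) (A : Set X) : Prop :=
  (A ∩ W.U i).Nonempty ∧ (A ∩ W.V i).Nonempty

/-- The wall `k` separates the walls `i` and `j`: some closed halfspace of `i` and some
closed halfspace of `j` lie in distinct open halfspaces of `k`. -/
def SeparatesWalls (k i j : ι) : Prop :=
  k ≠ i ∧ k ≠ j ∧ ∃ a bi bj : Bool,
    W.side i bi ⊆ W.openSide k a ∧ W.side j bj ⊆ W.openSide k (!a)

/-- Distinct walls `i`, `j` osculate if they are not transverse and no wall separates them. -/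
def Osculate (i j : ι) : Prop :=
  i ≠ j ∧ ¬ W.Transverse i j ∧ ∀ k : ι, ¬ W.SeparatesWalls k i j

/-- Two `0`-cubes are adjacent if they differ at exactly one wall index. -/
def Adjacent (c d : ι → Bool) : Prop :=
  W.IsZeroCube c ∧ W.IsZeroCube d ∧ ∃! i : ι, c i ≠ d i

end Wallspace

/-- A group `G` acts on the wallspace `W` if it acts on `X` and on the index set so that
the unordered pair of halfspaces of `g • i` is the `g`-translate of that of `i`. -/
def WallspaceAction (G : Type*) [Group G] {X ι : Type*} [MulAction G X] [MulAction G ι]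
    (W : Wallspace X ι) : Prop :=
  ∀ (g : G) (i : ι),
    (W.U (g • i) = g • W.U i ∧ W.V (g • i) = g • W.V i) ∨
    (W.U (g • i) = g • W.V i ∧ W.V (g • i) = g • W.U i)

section Auxiliary

/-- Generic decoding lemma: two elements of a two-element "pair" that agree on the
propositional encoding `· = U` must be equal. -/
lemma eq_of_encode {α : Type*} {U V A B : α} (hA : A = U ∨ A = V) (hB : B = U ∨ B = V)
    (h : (A = U) = (B = U)) : A = B := by
  have hiff : (A = U) ↔ (B = U) := iff_of_eq h
  rcases hA with hA | hA
  · rw [hA, (hiff.mp hA).symm]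
  · rcases hB with hB | hB
    · rw [hiff.mpr hB, hB]
    · rw [hA, hB]

/-- Infinite pigeonhole: a map from an infinite set of naturals to a finite type has an
infinite fiber. -/
lemma exists_infinite_fiber {α : Type*} [Finite α] {s : Set ℕ} (hs : s.Infinite)
    (f : ℕ → α) : ∃ a : α, {n ∈ s | f n = a}.Infinite := by
  by_contra h
  push_neg at h
  have hsub : s ⊆ ⋃ a ∈ (Set.univ : Set α), {n ∈ s | f n = a} := by
    intro n hn
    exact Set.mem_biUnion (Set.mem_univ (f n)) ⟨hn, rfl⟩
  exact hs ((Set.finite_univ.biUnion (fun a _ => h a)).subset hsub)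

/-- Iterated refinement: given a list of maps from ℕ, an infinite set can be refined to an
infinite subset on which each map is either constant or finite-to-one. -/
lemma refine_list {ι' : Type*} (l : List (ℕ → ι')) :
    ∀ (s : Set ℕ), s.Infinite → ∃ t, t ⊆ s ∧ t.Infinite ∧
      ∀ f ∈ l, (∃ j, ∀ n ∈ t, f n = j) ∨ (∀ j, {n ∈ t | f n = j}.Finite) := by
  induction l with
  | nil => exact fun s hs => ⟨s, le_refl s, hs, fun f hf => absurd hf List.not_mem_nil⟩
  | cons f l ih =>
    intro s hs
    obtain ⟨t, hts, htinf, hl⟩ := ih s hs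
    by_cases hc : ∃ j, {n ∈ t | f n = j}.Infinite
    · obtain ⟨j₀, hj₀⟩ := hc
      refine ⟨{n ∈ t | f n = j₀}, fun n hn => hts hn.1, hj₀, ?_⟩
      intro f' hf'
      rcases List.mem_cons.mp hf' with rfl | hf'
      · exact Or.inl ⟨j₀, fun n hn => hn.2⟩
      · rcases hl f' hf' with ⟨j, hj⟩ | hfin
        · exact Or.inl ⟨j, fun n hn => hj n hn.1⟩
        · exact Or.inr fun j => (hfin j).subset (fun n hn => ⟨hn.1.1, hn.2⟩)
    · push_neg at hc
      refine ⟨t, hts, htinf, ?_⟩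
      intro f' hf'
      rcases List.mem_cons.mp hf' with rfl | hf'
      · exact Or.inr hc
      · exact hl f' hf'

variable {G X : Type*} [Group G] [MetricSpace X] [MulAction G X]

/-- Translates of closed balls under an isometric action. -/
lemma smul_closedBall_iso (hiso : ∀ (g : G) (x y : X), dist (g • x) (g • y) = dist x y)
    (g : G) (x : X) (ρ : ℝ) :
    g • Metric.closedBall x ρ = Metric.closedBall (g • x) ρ := by
  ext w
  rw [Set.mem_smul_set_iff_inv_smul_mem, Metric.mem_closedBall, Metric.mem_closedBall,
    ← hiso g (g⁻¹ • w) x, smul_inv_smul]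

end Auxiliary

namespace Wallspace

variable {X ι : Type*} (W : Wallspace X ι)

lemma mem_U_or_V (i : ι) (x : X) : x ∈ W.U i ∨ x ∈ W.V i := by
  have h : x ∈ W.U i ∪ W.V i := by rw [W.cover i]; trivial
  exact h

open Classical in
/-- The canonical halfspace of the wall `i` at the point `x`. -/
noncomputable def sigPt (x : X) (i : ι) : Set X :=
  if x ∈ W.U i then W.U i else W.V i

lemma sigPt_of_mem {x : X} {i : ι} (h : x ∈ W.U i) : W.sigPt x i = W.U i := if_pos h

lemma sigPt_of_not_mem {x : X} {i : ι} (h : x ∉ W.U i) : W.sigPt x i = W.V i := if_neg h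

lemma mem_sigPt (x : X) (i : ι) : x ∈ W.sigPt x i := by
  by_cases h : x ∈ W.U i
  · rw [W.sigPt_of_mem h]; exact h
  · rw [W.sigPt_of_not_mem h]; exact (W.mem_U_or_V i x).resolve_left h

lemma sigPt_eq_or (x : X) (i : ι) : W.sigPt x i = W.U i ∨ W.sigPt x i = W.V i := by
  by_cases h : x ∈ W.U i
  · exact Or.inl (W.sigPt_of_mem h)
  · exact Or.inr (W.sigPt_of_not_mem h)

lemma sigPt_ne {x y : X} {i : ι} (h : W.sigPt x i ≠ W.sigPt y i) :
    (x ∈ W.U i ∧ y ∉ W.U i) ∨ (x ∉ W.U i ∧ y ∈ W.U i) := by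
  by_cases hx : x ∈ W.U i <;> by_cases hy : y ∈ W.U i
  · exact absurd (by rw [W.sigPt_of_mem hx, W.sigPt_of_mem hy]) h
  · exact Or.inl ⟨hx, hy⟩
  · exact Or.inr ⟨hx, hy⟩
  · exact absurd (by rw [W.sigPt_of_not_mem hx, W.sigPt_of_not_mem hy]) h

/-- Only finitely many canonical halfspaces at `x` omit a given point `y`. -/
lemma sigPt_not_mem_finite (x y : X) : {i : ι | y ∉ W.sigPt x i}.Finite := by
  apply Set.Finite.subset ((W.sep_finite x y).union (W.betwixt_finite x))
  intro i hi
  simp only [Set.mem_setOf_eq] at hi ⊢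
  by_cases hx : x ∈ W.U i
  · rw [W.sigPt_of_mem hx] at hi
    have hyV : y ∈ W.V i := (W.mem_U_or_V i y).resolve_left hi
    by_cases hxV : x ∈ W.V i
    · exact Or.inr ⟨hx, hxV⟩
    · exact Or.inl (Or.inl ⟨⟨hx, hxV⟩, hyV, hi⟩)
  · rw [W.sigPt_of_not_mem hx] at hi
    have hxV : x ∈ W.V i := (W.mem_U_or_V i x).resolve_left hx
    have hyU : y ∈ W.U i := (W.mem_U_or_V i y).resolve_right hi
    exact Or.inl (Or.inr ⟨⟨hxV, hx⟩, hyU, hi⟩)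

variable {G : Type*} [Group G] [MulAction G X] [MulAction G ι]

/-- Pulling back a halfspace of the wall `g • i` gives a halfspace of `i`. -/
lemma pair_mem (hact : WallspaceAction G W) (g : G) (i : ι) {A : Set X}
    (h : A = W.U (g • i) ∨ A = W.V (g • i)) :
    g⁻¹ • A = W.U i ∨ g⁻¹ • A = W.V i := by
  rcases hact g i with ⟨h1, h2⟩ | ⟨h1, h2⟩ <;> rcases h with rfl | rfl <;>
    simp [h1, h2, inv_smul_smul]

/-- Equivariance of canonical halfspaces away from betwixt walls. -/
lemma sigPt_smul (hact : WallspaceAction G W) (g : G) (w : X) (i : ι)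
    (hbtw : w ∉ W.U i ∩ W.V i) :
    W.sigPt (g • w) (g • i) = g • W.sigPt w i := by
  rcases hact g i with ⟨h1, h2⟩ | ⟨h1, h2⟩
  · by_cases hw : w ∈ W.U i
    · rw [W.sigPt_of_mem (show g • w ∈ W.U (g • i) by
        rw [h1]; exact Set.smul_mem_smul_set hw), h1, W.sigPt_of_mem hw]
    · rw [W.sigPt_of_not_mem (show g • w ∉ W.U (g • i) by
        rw [h1]; intro hc; exact hw (Set.smul_mem_smul_set_iff.mp hc)), h2,
        W.sigPt_of_not_mem hw]
  · by_cases hw : w ∈ W.U i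
    · have hwV : w ∉ W.V i := fun hv => hbtw ⟨hw, hv⟩
      rw [W.sigPt_of_not_mem (show g • w ∉ W.U (g • i) by
        rw [h1]; intro hc; exact hwV (Set.smul_mem_smul_set_iff.mp hc)), h2,
        W.sigPt_of_mem hw]
    · have hwV : w ∈ W.V i := (W.mem_U_or_V i w).resolve_left hw
      rw [W.sigPt_of_mem (show g • w ∈ W.U (g • i) by
        rw [h1]; exact Set.smul_mem_smul_set hwV), h1, W.sigPt_of_not_mem hw]

/-- The second (complementary) equivariance condition follows from the first. -/
lemma side_other (hact : WallspaceAction G W) (g : G) (i : ι) (c : ι → Bool)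
    (h : W.side (g • i) (c (g • i)) = g • W.side i (c i)) :
    W.side (g • i) (!(c (g • i))) = g • W.side i (!(c i)) := by
  have hcan : ∀ A B : Set X, g • A = g • B → A = B := by
    intro A B hAB
    have := congrArg (fun S => g⁻¹ • S) hAB
    simpa [inv_smul_smul] using this
  rcases hact g i with ⟨h1, h2⟩ | ⟨h1, h2⟩ <;>
    cases hc1 : c (g • i) <;> cases hc2 : c i <;>
      rw [hc1, hc2] at h <;>
      simp only [Wallspace.side, Bool.not_true, Bool.not_false] at h ⊢
  · -- straight, false, false : h : V(g•i) = g•V i ; goal U(g•i) = g•U i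
    exact h1
  · -- straight, false, true : h : V(g•i) = g•U i ; goal U(g•i) = g•V i
    rw [h2] at h
    rw [h1, hcan _ _ h]
  · -- straight, true, false : h : U(g•i) = g•V i ; goal V(g•i) = g•U i
    rw [h1] at h
    rw [h2, hcan _ _ h]
  · exact h2
  · -- swapped, false, false : h : V(g•i) = g•V i, but h2 : V(g•i) = g•U i; goal U(g•i) = g•U i
    rw [h2] at h
    rw [h1, hcan _ _ h]
  · -- swapped, false, true : h : V(g•i) = g•U i ; goal U(g•i) = g•V i
    exact h1
  · -- swapped, true, false : h : U(g•i) = g•V i ; goal V(g•i) = g•U i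
    exact h2
  · -- swapped, true, true : h : U(g•i) = g•U i, h1 : U(g•i) = g • V i; goal V(g•i) = g•V i
    rw [h1] at h
    rw [h2, hcan _ _ h]

/-- Translating open halfspaces: there is a relabelling `f` of the two sides. -/
lemma openSide_smul (hact : WallspaceAction G W) (g : G) (i : ι) :
    ∃ f : Bool → Bool, (∀ b, W.openSide (g • i) (f b) = g • W.openSide i b) ∧
      (∀ b, f (!b) = !(f b)) := by
  rcases hact g i with ⟨h1, h2⟩ | ⟨h1, h2⟩
  · refine ⟨id, fun b => ?_, fun b => rfl⟩
    have hs : ∀ b', W.side (g • i) b' = g • W.side i b' := by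
      intro b'; cases b' <;> simp only [Wallspace.side] <;> [exact h2; exact h1]
    simp only [id, Wallspace.openSide, hs, Set.smul_set_sdiff]
  · refine ⟨(fun b => !b), fun b => ?_, fun b => rfl⟩
    have hs : ∀ b', W.side (g • i) (!b') = g • W.side i b' := by
      intro b'; cases b' <;> simp only [Wallspace.side, Bool.not_true, Bool.not_false] <;>
        [exact h1; exact h2]
    have hs2 : W.side (g • i) (!(!b)) = g • W.side i (!b) := by
      rw [Bool.not_not]
      cases b <;> simp only [Wallspace.side, Bool.not_true, Bool.not_false] <;>
        [exact h2; exact h1]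
    simp only [Wallspace.openSide, hs, hs2, Set.smul_set_sdiff]

/-- A wall crossing a translated set pulls back to a wall crossing the set. -/
lemma crosses_pull (hact : WallspaceAction G W) (g : G) (j : ι) (A : Set X)
    (h : W.Crosses j (g • A)) : W.Crosses (g⁻¹ • j) A := by
  obtain ⟨⟨u, huA, huU⟩, ⟨v, hvA, hvV⟩⟩ := h
  rcases hact g (g⁻¹ • j) with ⟨h1, h2⟩ | ⟨h1, h2⟩ <;> rw [smul_inv_smul] at h1 h2
  · refine ⟨⟨g⁻¹ • u, Set.mem_smul_set_iff_inv_smul_mem.mp huA, ?_⟩,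
      ⟨g⁻¹ • v, Set.mem_smul_set_iff_inv_smul_mem.mp hvA, ?_⟩⟩
    · rw [h1] at huU; exact Set.mem_smul_set_iff_inv_smul_mem.mp huU
    · rw [h2] at hvV; exact Set.mem_smul_set_iff_inv_smul_mem.mp hvV
  · refine ⟨⟨g⁻¹ • v, Set.mem_smul_set_iff_inv_smul_mem.mp hvA, ?_⟩,
      ⟨g⁻¹ • u, Set.mem_smul_set_iff_inv_smul_mem.mp huA, ?_⟩⟩
    · rw [h2] at hvV; exact Set.mem_smul_set_iff_inv_smul_mem.mp hvV
    · rw [h1] at huU; exact Set.mem_smul_set_iff_inv_smul_mem.mp huU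

end Wallspace

/-- **Ball–Ball separation.**  Let `X` be a metric space with a wallspace structure in which
every ball of finite radius is crossed by only finitely many walls.  Suppose `G` acts on the
wallspace by isometries, the action on `X` is cobounded, and the induced action on the dual
cube complex is proper (every `0`-cube has finite stabilizer).  Then for each `r > 0` there
exists `m` such that any two points at distance more than `m` have their `r`-neighborhoods
separated by a wall. -/
theorem ball_ball_separation
    {G X ι : Type*} [Group G] [MetricSpace X] [MulAction G X] [MulAction G ι]
    (W : Wallspace X ι) (hact : WallspaceAction G W)
    (hiso : ∀ (g : G) (x y : X), dist (g • x) (g • y) = dist x y)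
    (hballs : ∀ (x : X) (r : ℝ), {i : ι | W.Crosses i (Metric.closedBall x r)}.Finite)
    (hcobound : ∃ (x₀ : X) (R₀ : ℝ), ∀ x : X, ∃ g : G, dist x (g • x₀) ≤ R₀)
    (hproper : ∀ c : ι → Bool, W.IsZeroCube c →
      {g : G | ∀ i : ι,
        W.side (g • i) (c (g • i)) = g • W.side i (c i) ∧
        W.side (g • i) (!(c (g • i))) = g • W.side i (!(c i))}.Finite) :
    ∀ r : ℝ, 0 < r → ∃ m : ℝ, ∀ x₁ x₂ : X, dist x₁ x₂ > m →
      ∃ (i : ι) (b : Bool),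
        Metric.closedBall x₁ r ⊆ W.openSide i b ∧
        Metric.closedBall x₂ r ⊆ W.openSide i (!b) := by
  classical
  intro r hr
  by_contra hcon
  obtain ⟨x₀, R₀, hR⟩ := hcobound
  have key : ∀ m : ℝ, ∃ x₁ x₂ : X, dist x₁ x₂ > m ∧ ∀ i b,
      ¬(Metric.closedBall x₁ r ⊆ W.openSide i b ∧
        Metric.closedBall x₂ r ⊆ W.openSide i (!b)) := by
    intro m
    by_contra hm
    push_neg at hm
    exact hcon ⟨m, hm⟩
  have hR₀ : 0 ≤ R₀ := by
    obtain ⟨g, hg⟩ := hR x₀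
    exact dist_nonneg.trans hg
  set R : ℝ := R₀ + r with hRdef
  have hRpos : 0 ≤ R := by linarith
  -- the translated failure sequence
  have hseq : ∀ n : ℕ, ∃ (x y : X) (g : G),
      dist x x₀ ≤ R₀ ∧ dist y (g • x₀) ≤ R₀ ∧ (n : ℝ) < dist x y ∧
      ∀ i b, ¬(Metric.closedBall x r ⊆ W.openSide i b ∧
        Metric.closedBall y r ⊆ W.openSide i (!b)) := by
    intro n
    obtain ⟨a, b, hab, hnos⟩ := key (n : ℝ)
    obtain ⟨h, hh⟩ := hR a
    obtain ⟨g', hg'⟩ := hR b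
    refine ⟨h⁻¹ • a, h⁻¹ • b, h⁻¹ * g', ?_, ?_, ?_, ?_⟩
    · have : dist (h⁻¹ • a) (h⁻¹ • (h • x₀)) = dist a (h • x₀) := hiso h⁻¹ a (h • x₀)
      rw [inv_smul_smul] at this
      rw [this]; exact hh
    · rw [mul_smul]
      exact (hiso h⁻¹ b (g' • x₀)).trans_le hg'
    · have : dist (h⁻¹ • a) (h⁻¹ • b) = dist a b := hiso h⁻¹ a b
      rw [this]; exact hab
    · intro i bb hsub
      obtain ⟨f, hf1, hf2⟩ := W.openSide_smul hact h i
      refine hnos (h • i) (f bb) ⟨?_, ?_⟩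
      · rw [hf1 bb]
        have hball : Metric.closedBall a r = h • Metric.closedBall (h⁻¹ • a) r := by
          rw [smul_closedBall_iso hiso, smul_inv_smul]
        rw [hball]
        exact Set.smul_set_mono hsub.1
      · rw [← hf2 bb, hf1 (!bb)]
        have hball : Metric.closedBall b r = h • Metric.closedBall (h⁻¹ • b) r := by
          rw [smul_closedBall_iso hiso, smul_inv_smul]
        rw [hball]
        exact Set.smul_set_mono hsub.2
  choose xx yy gg hx hy hd hns using hseq
  -- the finite set of walls crossing the base ball
  set F : Set ι := {i : ι | W.Crosses i (Metric.closedBall x₀ R)} with hFdef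
  have hFfin : F.Finite := hballs x₀ R
  haveI : Finite ↥F := hFfin.to_subtype
  have hx₀mem : x₀ ∈ Metric.closedBall x₀ R := Metric.mem_closedBall_self hRpos
  -- basic geometric facts
  have f1 : ∀ n, Metric.closedBall (xx n) r ⊆ Metric.closedBall x₀ R :=
    fun n => Metric.closedBall_subset_closedBall' (by have := hx n; linarith)
  have f2 : ∀ n, Metric.closedBall (yy n) r ⊆ Metric.closedBall (gg n • x₀) R :=
    fun n => Metric.closedBall_subset_closedBall' (by have := hy n; linarith)
  -- canonical halfspaces whose walls miss the base ball agree with those at x₀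
  have f4 : ∀ w : X, dist w x₀ ≤ R₀ → ∀ i, i ∉ F → W.sigPt w i = W.sigPt x₀ i := by
    intro w hw i hi
    by_contra hne
    apply hi
    have hwB : w ∈ Metric.closedBall x₀ R := by
      rw [Metric.mem_closedBall]; linarith
    rcases W.sigPt_ne hne with ⟨h1, h2⟩ | ⟨h1, h2⟩
    · exact ⟨⟨w, hwB, h1⟩, ⟨x₀, hx₀mem, (W.mem_U_or_V i x₀).resolve_left h2⟩⟩
    · exact ⟨⟨x₀, hx₀mem, h2⟩, ⟨w, hwB, (W.mem_U_or_V i w).resolve_left h1⟩⟩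
  have f5 : ∀ w : X, dist w x₀ ≤ R₀ → ∀ i, w ∈ W.U i ∩ W.V i → i ∈ F := by
    intro w hw i hmem
    have hwB : w ∈ Metric.closedBall x₀ R := by
      rw [Metric.mem_closedBall]; linarith
    exact ⟨⟨w, hwB, hmem.1⟩, ⟨w, hwB, hmem.2⟩⟩
  -- the pulled back canonical cubes
  set e : ℕ → ι → Set X := fun n i => (gg n)⁻¹ • W.sigPt (yy n) (gg n • i) with hedef
  have hzdist : ∀ n, dist ((gg n)⁻¹ • yy n) x₀ ≤ R₀ := by
    intro n
    have : dist ((gg n)⁻¹ • yy n) ((gg n)⁻¹ • (gg n • x₀)) = dist (yy n) (gg n • x₀) :=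
      hiso (gg n)⁻¹ _ _
    rw [inv_smul_smul] at this
    rw [this]; exact hy n
  have f7 : ∀ n, ∀ i, i ∉ F → e n i = W.sigPt x₀ i := by
    intro n i hi
    have hbtw : (gg n)⁻¹ • yy n ∉ W.U i ∩ W.V i := fun hmem => hi (f5 _ (hzdist n) i hmem)
    have hpush := W.sigPt_smul hact (gg n) ((gg n)⁻¹ • yy n) i hbtw
    rw [smul_inv_smul] at hpush
    calc e n i = (gg n)⁻¹ • W.sigPt (yy n) (gg n • i) := rfl
    _ = (gg n)⁻¹ • (gg n • W.sigPt ((gg n)⁻¹ • yy n) i) := by rw [hpush]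
    _ = W.sigPt ((gg n)⁻¹ • yy n) i := inv_smul_smul _ _
    _ = W.sigPt x₀ i := f4 _ (hzdist n) i hi
  have f8 : ∀ n i, e n i = W.U i ∨ e n i = W.V i :=
    fun n i => W.pair_mem hact (gg n) i (W.sigPt_eq_or (yy n) (gg n • i))
  -- Claim C: walls missing both balls orient canonically
  have f9 : ∀ n j, j ∉ F → ¬ W.Crosses j (Metric.closedBall (gg n • x₀) R) →
      W.sigPt (yy n) j = W.sigPt x₀ j := by
    intro n j hjF hjG
    by_contra hne
    have hyB : yy n ∈ Metric.closedBall (gg n • x₀) R := by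
      rw [Metric.mem_closedBall]
      have := hy n; linarith
    rcases W.sigPt_ne hne with ⟨h1, h2⟩ | ⟨h1, h2⟩
    · -- yy n ∈ U j, x₀ ∉ U j
      have hx₀V : x₀ ∈ W.V j := (W.mem_U_or_V j x₀).resolve_left h2
      have hBU : Metric.closedBall x₀ R ∩ W.U j = ∅ := by
        by_contra hne'
        exact hjF ⟨Set.nonempty_iff_ne_empty.mpr hne', ⟨x₀, hx₀mem, hx₀V⟩⟩
      have hGV : Metric.closedBall (gg n • x₀) R ∩ W.V j = ∅ := by
        by_contra hne'
        exact hjG ⟨⟨yy n, hyB, h1⟩, Set.nonempty_iff_ne_empty.mpr hne'⟩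
      refine hns n j false ⟨?_, ?_⟩
      · intro w hw
        have hwB : w ∈ Metric.closedBall x₀ R := f1 n hw
        have hwU : w ∉ W.U j := fun hc => (Set.eq_empty_iff_forall_notMem.mp hBU w) ⟨hwB, hc⟩
        exact ⟨(W.mem_U_or_V j w).resolve_left hwU, hwU⟩
      · intro w hw
        have hwB : w ∈ Metric.closedBall (gg n • x₀) R := f2 n hw
        have hwV : w ∉ W.V j := fun hc => (Set.eq_empty_iff_forall_notMem.mp hGV w) ⟨hwB, hc⟩
        exact ⟨(W.mem_U_or_V j w).resolve_right hwV, hwV⟩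
    · -- yy n ∉ U j, x₀ ∈ U j
      have hyV : yy n ∈ W.V j := (W.mem_U_or_V j (yy n)).resolve_left h1
      have hBV : Metric.closedBall x₀ R ∩ W.V j = ∅ := by
        by_contra hne'
        exact hjF ⟨⟨x₀, hx₀mem, h2⟩, Set.nonempty_iff_ne_empty.mpr hne'⟩
      have hGU : Metric.closedBall (gg n • x₀) R ∩ W.U j = ∅ := by
        by_contra hne'
        exact hjG ⟨Set.nonempty_iff_ne_empty.mpr hne', ⟨yy n, hyB, hyV⟩⟩
      refine hns n j true ⟨?_, ?_⟩
      · intro w hw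
        have hwB : w ∈ Metric.closedBall x₀ R := f1 n hw
        have hwV : w ∉ W.V j := fun hc => (Set.eq_empty_iff_forall_notMem.mp hBV w) ⟨hwB, hc⟩
        exact ⟨(W.mem_U_or_V j w).resolve_right hwV, hwV⟩
      · intro w hw
        have hwB : w ∈ Metric.closedBall (gg n • x₀) R := f2 n hw
        have hwU : w ∉ W.U j := fun hc => (Set.eq_empty_iff_forall_notMem.mp hGU w) ⟨hwB, hc⟩
        exact ⟨(W.mem_U_or_V j w).resolve_left hwU, hwU⟩
  have f10 : ∀ n (j : ι), W.Crosses j (Metric.closedBall (gg n • x₀) R) → (gg n)⁻¹ • j ∈ F := by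
    intro n j hj
    have : W.Crosses j (gg n • Metric.closedBall x₀ R) := by
      rwa [smul_closedBall_iso hiso]
    exact W.crosses_pull hact (gg n) j _ this
  -- the Q-predicate
  set Qpred : ℕ → ι → Prop := fun n q =>
    gg n • q ∉ F ∧ W.sigPt (yy n) (gg n • q) ≠ W.sigPt x₀ (gg n • q) with hQpreddef
  have f14 : ∀ n q, Qpred n q → q ∈ F := by
    intro n q ⟨hq1, hq2⟩
    have hcr : W.Crosses (gg n • q) (Metric.closedBall (gg n • x₀) R) := by
      by_contra hc
      exact hq2 (f9 n (gg n • q) hq1 hc)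
    have := f10 n (gg n • q) hcr
    rwa [inv_smul_smul] at this
  
  -- Pigeonhole 1 : the pulled-back cubes agree on F along an infinite set
  set enc0 : ℕ → (↥F → Prop) := fun n i => e n ↑i = W.U ↑i with henc0
  obtain ⟨a₀, hM₀⟩ := exists_infinite_fiber Set.infinite_univ enc0
  set M₀ : Set ℕ := {n ∈ Set.univ | enc0 n = a₀} with hM₀def
  have f11 : ∀ n ∈ M₀, ∀ k ∈ M₀, ∀ i, e n i = e k i := by
    intro n hn k hk i
    by_cases hi : i ∈ F
    · have hkey := congrFun ((hn.2).trans (hk.2).symm) (⟨i, hi⟩ : ↥F)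
      exact eq_of_encode (f8 n i) (f8 k i) hkey
    · rw [f7 n i hi, f7 k i hi]
  -- Pigeonhole 2 : the canonical cubes at yy n agree on F
  set enc1 : ℕ → (↥F → Prop) := fun n i => W.sigPt (yy n) ↑i = W.U ↑i with henc1
  obtain ⟨a₁, hM₁⟩ := exists_infinite_fiber hM₀ enc1
  set M₁ : Set ℕ := {n ∈ M₀ | enc1 n = a₁} with hM₁def
  have hM₁M₀ : M₁ ⊆ M₀ := fun n hn => hn.1
  have f12 : ∀ n ∈ M₁, ∀ k ∈ M₁, ∀ i, i ∈ F → W.sigPt (yy n) i = W.sigPt (yy k) i := by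
    intro n hn k hk i hi
    have hkey := congrFun ((hn.2).trans (hk.2).symm) (⟨i, hi⟩ : ↥F)
    exact eq_of_encode (W.sigPt_eq_or _ i) (W.sigPt_eq_or _ i) hkey
  -- Pigeonhole 3 : the Q-sets agree
  set enc2 : ℕ → (↥F → Prop) := fun n q => Qpred n ↑q with henc2
  obtain ⟨a₂, hM₂⟩ := exists_infinite_fiber hM₁ enc2
  set M₂ : Set ℕ := {n ∈ M₁ | enc2 n = a₂} with hM₂def
  have hM₂M₁ : M₂ ⊆ M₁ := fun n hn => hn.1
  have hM₂inf : M₂.Infinite := hM₂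
  have f13 : ∀ n ∈ M₂, ∀ k ∈ M₂, ∀ q, Qpred n q ↔ Qpred k q := by
    intro n hn k hk q
    by_cases hq : q ∈ F
    · exact iff_of_eq (congrFun ((hn.2).trans (hk.2).symm) (⟨q, hq⟩ : ↥F))
    · exact iff_of_false (fun h => hq (f14 n q h)) (fun h => hq (f14 k q h))
  obtain ⟨n₁, hn₁⟩ := hM₂inf.nonempty
  set Q : Set ι := {q | Qpred n₁ q} with hQdef
  have hQF : Q ⊆ F := fun q hq => f14 n₁ q hq
  have hQfin : Q.Finite := hFfin.subset hQF
  have hQiff : ∀ n ∈ M₂, ∀ q, Qpred n q ↔ q ∈ Q := fun n hn q => f13 n hn n₁ hn₁ q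
  -- refine along the maps n ↦ gg n • q for q ∈ Q
  obtain ⟨M₃, hM₃M₂, hM₃inf, hM₃⟩ := refine_list
    (hQfin.toFinset.toList.map (fun q => fun n => gg n • q)) M₂ hM₂inf
  have hQdisj : ∀ q ∈ Q, (∃ j, ∀ n ∈ M₃, gg n • q = j) ∨
      (∀ j, {n ∈ M₃ | gg n • q = j}.Finite) := by
    intro q hq
    exact hM₃ _ (List.mem_map_of_mem (Finset.mem_toList.mpr (hQfin.mem_toFinset.mpr hq)))
  set Qc : Set ι := {q ∈ Q | ∃ j, ∀ n ∈ M₃, gg n • q = j} with hQcdef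
  set Qv : Set ι := Q \ Qc with hQvdef
  have hQvfib : ∀ q ∈ Qv, ∀ j, {n ∈ M₃ | gg n • q = j}.Finite := by
    intro q hq j
    rcases hQdisj q hq.1 with hconst | hfin
    · exact absurd ⟨hq.1, hconst⟩ hq.2
    · exact hfin j
  set wfun : ι → ι := fun q =>
    if h : ∃ j, ∀ n ∈ M₃, gg n • q = j then h.choose else q with hwfun
  have hWcprop : ∀ q ∈ Qc, ∀ n ∈ M₃, gg n • q = wfun q := by
    intro q hq n hn
    have h : ∃ j, ∀ n ∈ M₃, gg n • q = j := hq.2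
    rw [hwfun]
    simp only [dif_pos h]
    exact h.choose_spec n hn
  set Wc : Set ι := wfun '' Qc with hWcdef
  have hQvfin : Qv.Finite := hQfin.subset (fun q hq => hq.1)
  have hQcfin : Qc.Finite := hQfin.subset (fun q hq => hq.1)
  have hWcfin : Wc.Finite := hQcfin.image _
  -- M₄ : avoid Wc with the variable part
  set bad : Set ℕ := ⋃ q ∈ Qv, ⋃ j ∈ Wc, {n ∈ M₃ | gg n • q = j} with hbaddef
  have hbadfin : bad.Finite :=
    hQvfin.biUnion (fun q hq => hWcfin.biUnion (fun j _ => hQvfib q hq j))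
  set M₄ : Set ℕ := M₃ \ bad with hM₄def
  have hM₄inf : M₄.Infinite := hM₃inf.diff hbadfin
  have hM₄M₃ : M₄ ⊆ M₃ := fun n hn => hn.1
  have hM₄M₂ : M₄ ⊆ M₂ := fun n hn => hM₃M₂ (hM₄M₃ hn)
  have hM₄M₁ : M₄ ⊆ M₁ := fun n hn => hM₂M₁ (hM₄M₂ hn)
  have hM₄M₀ : M₄ ⊆ M₀ := fun n hn => hM₁M₀ (hM₄M₁ hn)
  have hM₄Wc : ∀ n ∈ M₄, ∀ q ∈ Qv, gg n • q ∉ Wc := by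
    intro n hn q hq hmem
    exact hn.2 (Set.mem_biUnion hq (Set.mem_biUnion hmem ⟨hn.1, rfl⟩))
  obtain ⟨n₀, hn₀⟩ := hM₄inf.nonempty
  -- the limit cube, as a choice of halfspaces
  set σinf : ι → Set X := fun j =>
    if j ∈ F ∨ j ∈ Wc then W.sigPt (yy n₀) j else W.sigPt x₀ j with hσdef
  have factA : ∀ n ∈ M₄, ∀ j, (∀ q ∈ Qv, j ≠ gg n • q) → σinf j = W.sigPt (yy n) j := by
    intro n hn j hj
    by_cases hjF : j ∈ F
    · rw [hσdef]
      simp only [if_pos (Or.inl hjF : j ∈ F ∨ j ∈ Wc)]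
      exact f12 n₀ (hM₄M₁ hn₀) n (hM₄M₁ hn) j hjF
    · by_cases hjW : j ∈ Wc
      · obtain ⟨q₀, hq₀, rfl⟩ := hjW
        have hgn : gg n • q₀ = wfun q₀ := hWcprop q₀ hq₀ n (hM₄M₃ hn)
        have hgn₀ : gg n₀ • q₀ = wfun q₀ := hWcprop q₀ hq₀ n₀ (hM₄M₃ hn₀)
        have hne_n : W.sigPt (yy n) (wfun q₀) ≠ W.sigPt x₀ (wfun q₀) := by
          have h := ((hQiff n (hM₄M₂ hn) q₀).mpr hq₀.1).2
          rwa [hgn] at h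
        have hne_n₀ : W.sigPt (yy n₀) (wfun q₀) ≠ W.sigPt x₀ (wfun q₀) := by
          have h := ((hQiff n₀ (hM₄M₂ hn₀) q₀).mpr hq₀.1).2
          rwa [hgn₀] at h
        rw [hσdef]
        simp only [if_pos (Or.inr (⟨q₀, hq₀, rfl⟩ : wfun q₀ ∈ Wc) :
          wfun q₀ ∈ F ∨ wfun q₀ ∈ Wc)]
        rcases W.sigPt_eq_or x₀ (wfun q₀) with h0 | h0
        · have hv1 : W.sigPt (yy n₀) (wfun q₀) = W.V (wfun q₀) :=
            (W.sigPt_eq_or _ _).resolve_left (fun hc => hne_n₀ (hc.trans h0.symm))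
          have hv2 : W.sigPt (yy n) (wfun q₀) = W.V (wfun q₀) :=
            (W.sigPt_eq_or _ _).resolve_left (fun hc => hne_n (hc.trans h0.symm))
          rw [hv1, hv2]
        · have hv1 : W.sigPt (yy n₀) (wfun q₀) = W.U (wfun q₀) :=
            (W.sigPt_eq_or _ _).resolve_right (fun hc => hne_n₀ (hc.trans h0.symm))
          have hv2 : W.sigPt (yy n) (wfun q₀) = W.U (wfun q₀) :=
            (W.sigPt_eq_or _ _).resolve_right (fun hc => hne_n (hc.trans h0.symm))
          rw [hv1, hv2]
      · rw [hσdef]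
        simp only [if_neg (show ¬(j ∈ F ∨ j ∈ Wc) by tauto)]
        by_contra hne
        have hQp : Qpred n ((gg n)⁻¹ • j) := by
          constructor
          · rw [smul_inv_smul]; exact hjF
          · rw [smul_inv_smul]; exact fun hc => hne hc.symm
        have hqQ : (gg n)⁻¹ • j ∈ Q := (hQiff n (hM₄M₂ hn) _).mp hQp
        by_cases hqc : (gg n)⁻¹ • j ∈ Qc
        · have h := hWcprop _ hqc n (hM₄M₃ hn)
          rw [smul_inv_smul] at h
          exact hjW ⟨_, hqc, h.symm⟩
        · exact hj _ ⟨hqQ, hqc⟩ (by rw [smul_inv_smul])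
  have factB : ∀ n ∈ M₄, ∀ q ∈ Qv,
      σinf (gg n • q) = W.sigPt x₀ (gg n • q) ∧
      W.sigPt (yy n) (gg n • q) ≠ W.sigPt x₀ (gg n • q) := by
    intro n hn q hq
    have hQp : Qpred n q := (hQiff n (hM₄M₂ hn) q).mpr hq.1
    refine ⟨?_, hQp.2⟩
    rw [hσdef]
    have hnot : ¬(gg n • q ∈ F ∨ gg n • q ∈ Wc) := by
      rintro (h | h)
      · exact hQp.1 h
      · exact hM₄Wc n hn q hq h
    simp only [if_neg hnot]
  -- the pushforward identity
  set σstar : ι → Set X := e n₀ with hσstardef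
  have f15 : ∀ n ∈ M₄, ∀ i, W.sigPt (yy n) (gg n • i) = gg n • σstar i := by
    intro n hn i
    have h1 : e n i = σstar i := f11 n (hM₄M₀ hn) n₀ (hM₄M₀ hn₀) i
    have h2 : gg n • e n i = W.sigPt (yy n) (gg n • i) := smul_inv_smul _ _
    rw [← h2, h1]
  have hstar_mem : ∀ i, σstar i = W.U i ∨ σstar i = W.V i := fun i => f8 n₀ i
  -- constancy of the pullback of the limit cube
  have f16 : ∀ n ∈ M₄, ∀ i,
      (gg n)⁻¹ • σinf (gg n • i) = (gg n₀)⁻¹ • σinf (gg n₀ • i) := by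
    intro n hn i
    by_cases hqv0 : i ∈ Qv
    · have hval : ∀ m ∈ M₄, (gg m)⁻¹ • σinf (gg m • i) =
          (if σstar i = W.U i then W.V i else W.U i) := by
        intro m hm
        obtain ⟨hB1, hB2⟩ := factB m hm i hqv0
        rw [hB1]
        have hpull : (gg m)⁻¹ • W.sigPt x₀ (gg m • i) = W.U i ∨
            (gg m)⁻¹ • W.sigPt x₀ (gg m • i) = W.V i :=
          W.pair_mem hact (gg m) i (W.sigPt_eq_or x₀ (gg m • i))
        have hne' : (gg m)⁻¹ • W.sigPt x₀ (gg m • i) ≠ σstar i := by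
          intro hEq
          apply hB2
          have h := congrArg (fun S => gg m • S) hEq
          simp only [smul_inv_smul] at h
          rw [h, ← f15 m hm i]
        by_cases hU : σstar i = W.U i
        · rw [if_pos hU]
          rcases hpull with h' | h'
          · exact absurd (h'.trans hU.symm) hne'
          · exact h'
        · rw [if_neg hU]
          rcases hpull with h' | h'
          · exact h'
          · exfalso
            have hV : σstar i = W.V i := (hstar_mem i).resolve_left hU
            exact hne' (h'.trans hV.symm)
      rw [hval n hn, hval n₀ hn₀]
    · have hject : ∀ m, (∀ q ∈ Qv, gg m • i ≠ gg m • q) := by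
        intro m q hq heq
        have hiq : i = q := smul_left_cancel _ heq
        rw [hiq] at hqv0
        exact hqv0 hq
      have hAn : σinf (gg n • i) = W.sigPt (yy n) (gg n • i) :=
        factA n hn _ (hject n)
      have hAn₀ : σinf (gg n₀ • i) = W.sigPt (yy n₀) (gg n₀ • i) :=
        factA n₀ hn₀ _ (hject n₀)
      rw [hAn, f15 n hn i, inv_smul_smul, hAn₀, f15 n₀ hn₀ i, inv_smul_smul]
  -- the limit cube as an orientation
  set cinf : ι → Bool := fun j => if σinf j = W.U j then true else false with hcinfdef
  have hσpair : ∀ j, σinf j = W.U j ∨ σinf j = W.V j := by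
    intro j
    by_cases h : j ∈ F ∨ j ∈ Wc
    · rw [hσdef]; simp only [if_pos h]; exact W.sigPt_eq_or _ _
    · rw [hσdef]; simp only [if_neg h]; exact W.sigPt_eq_or _ _
  have hside : ∀ j, W.side j (cinf j) = σinf j := by
    intro j
    by_cases h : σinf j = W.U j
    · rw [hcinfdef]
      simp only [if_pos h]
      exact h.symm
    · rw [hcinfdef]
      simp only [if_neg h]
      exact ((hσpair j).resolve_left h).symm
  have hgoodn : ∀ (i j : ι), ∃ n ∈ M₄,
      (∀ q ∈ Qv, i ≠ gg n • q) ∧ (∀ q ∈ Qv, j ≠ gg n • q) := by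
    intro i j
    have hbad2fin : (⋃ q ∈ Qv, ({n ∈ M₃ | gg n • q = i} ∪ {n ∈ M₃ | gg n • q = j})).Finite :=
      hQvfin.biUnion (fun q hq => (hQvfib q hq i).union (hQvfib q hq j))
    obtain ⟨n, hn⟩ := (hM₄inf.diff hbad2fin).nonempty
    refine ⟨n, hn.1, ?_, ?_⟩
    · intro q hq heq
      exact hn.2 (Set.mem_biUnion hq (Or.inl ⟨hM₄M₃ hn.1, heq.symm⟩))
    · intro q hq heq
      exact hn.2 (Set.mem_biUnion hq (Or.inr ⟨hM₄M₃ hn.1, heq.symm⟩))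
  have hcube : W.IsZeroCube cinf := by
    constructor
    · intro i j
      obtain ⟨n, hn, hi, hj⟩ := hgoodn i j
      rw [hside i, hside j, factA n hn i hi, factA n hn j hj]
      exact ⟨yy n, W.mem_sigPt _ _, W.mem_sigPt _ _⟩
    · intro x
      have hsub : {i : ι | x ∉ W.side i (cinf i)} ⊆
          {i : ι | x ∉ W.sigPt (yy n₀) i} ∪ ((fun q => gg n₀ • q) '' Qv) := by
        intro i hi
        simp only [Set.mem_setOf_eq, hside] at hi
        by_cases him : i ∈ (fun q => gg n₀ • q) '' Qv
        · exact Or.inr him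
        · left
          have hne : ∀ q ∈ Qv, i ≠ gg n₀ • q := by
            intro q hq heq
            exact him ⟨q, hq, heq.symm⟩
          rw [Set.mem_setOf_eq, ← factA n₀ hn₀ i hne]
          exact hi
      exact ((W.sigPt_not_mem_finite (yy n₀) x).union (hQvfin.image _)).subset hsub
  have hSfin := hproper cinf hcube
  have hmem : ∀ n ∈ M₄, (gg n * (gg n₀)⁻¹) ∈ {g : G | ∀ i : ι,
      W.side (g • i) (cinf (g • i)) = g • W.side i (cinf i) ∧
      W.side (g • i) (!(cinf (g • i))) = g • W.side i (!(cinf i))} := by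
    intro n hn
    have hinv : ∀ i, σinf ((gg n * (gg n₀)⁻¹) • i) = (gg n * (gg n₀)⁻¹) • σinf i := by
      intro i
      have e1 : (gg n * (gg n₀)⁻¹) • i = gg n • ((gg n₀)⁻¹ • i) := by rw [mul_smul]
      have hkey := f16 n hn ((gg n₀)⁻¹ • i)
      rw [smul_inv_smul] at hkey
      have h := congrArg (fun S => gg n • S) hkey
      simp only [smul_inv_smul] at h
      rw [e1, h, ← mul_smul]
    intro i
    have h1 : W.side ((gg n * (gg n₀)⁻¹) • i) (cinf ((gg n * (gg n₀)⁻¹) • i)) =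
        (gg n * (gg n₀)⁻¹) • W.side i (cinf i) := by
      rw [hside, hside]
      exact hinv i
    exact ⟨h1, W.side_other hact _ i cinf h1⟩
  -- each fiber of gg on M₄ is finite
  have hggfib : ∀ g : G, {n ∈ M₄ | gg n = g}.Finite := by
    intro g
    apply Set.Finite.subset (Set.finite_Iic (Nat.ceil (R₀ + dist x₀ (g • x₀) + R₀)))
    intro n hn
    have h1 : (n : ℝ) < dist (xx n) (yy n) := hd n
    have h2 : dist (xx n) (yy n) ≤ dist (xx n) x₀ + dist x₀ (g • x₀) + dist (g • x₀) (yy n) :=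
      dist_triangle4 _ _ _ _
    have h3 : dist (g • x₀) (yy n) ≤ R₀ := by
      rw [dist_comm, ← hn.2]
      exact hy n
    have h4 := hx n
    have hb : (n : ℝ) ≤ R₀ + dist x₀ (g • x₀) + R₀ := by linarith
    have hb2 := hb.trans (Nat.le_ceil _)
    exact Set.mem_Iic.mpr (by exact_mod_cast hb2)
  have hggim : (gg '' M₄).Infinite := by
    intro hfin
    apply hM₄inf
    have hsub : M₄ ⊆ ⋃ g ∈ gg '' M₄, {n ∈ M₄ | gg n = g} := by
      intro n hn
      exact Set.mem_biUnion ⟨n, hn, rfl⟩ ⟨hn, rfl⟩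
    exact (hfin.biUnion (fun g _ => hggfib g)).subset hsub
  have hTinf : ((fun g => g * (gg n₀)⁻¹) '' (gg '' M₄)).Infinite :=
    hggim.image ((mul_left_injective _).injOn)
  apply hTinf
  apply hSfin.subset
  rintro t ⟨g, ⟨n, hn, rfl⟩, rfl⟩
  exact hmem n hn
end

section
/- (Walls reversible at a common 0-cube cannot be separated) Let (X, W) be a wallspace and let c be a 0-cube of the dual cube complex. If two distinct wall indices i ≠ j are both reversible at c, then either the walls i and j are transverse, or no wall separates i from j (so i and j either are transverse or osculate). -/
open Pointwise

/-- **Walls reversible at a common `0`-cube cannot be separated.**  If two distinct walls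
`i ≠ j` are both reversible at a `0`-cube `c` of the dual cube complex, then either `i` and
`j` are transverse, or no wall separates `i` from `j` (so `i` and `j` are transverse or
osculate). -/
theorem reversible_at_common_cube_transverse_or_unseparated
    {X ι : Type*} (W : Wallspace X ι)
    (c : ι → Bool) (hc : W.IsZeroCube c)
    (i j : ι) (hij : i ≠ j)
    (hi : W.Reversible c i) (hj : W.Reversible c j) :
    W.Transverse i j ∨ ∀ k : ι, ¬ W.SeparatesWalls k i j := by
  classical
  right
  rintro k ⟨hki, hkj, a, bi, bj, hbi, hbj⟩
  have key : ∀ l : ι, l ≠ k → W.Reversible c l → ∀ b : Bool,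
      (W.side l b ∩ W.side k (c k)).Nonempty := by
    intro l hlk hrev b
    by_cases hb : b = c l
    · subst hb; exact hc.1 l k
    · have hb' : b = !(c l) := by cases b <;> cases h : c l <;> simp_all
      have hcube := hrev (Function.update c l (!(c l)))
        (Function.update_self _ _ _) (fun m hm => Function.update_of_ne hm _ _)
      have h2 := hcube.1 l k
      rw [Function.update_self, Function.update_of_ne hlk.symm] at h2
      rwa [hb']
  obtain ⟨x, hx1, hx2⟩ := key i (Ne.symm hki) hi bi
  obtain ⟨y, hy1, hy2⟩ := key j (Ne.symm hkj) hj bj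
  have hxa := hbi hx1
  have hya := hbj hy1
  have h1 : c k ≠ !a := fun h => hxa.2 (h ▸ hx2)
  have h2 : c k ≠ a := by
    intro h
    have := hya.2
    rw [Bool.not_not] at this
    exact this (h ▸ hy2)
  cases a <;> cases h : c k <;> simp_all
end

section
/- (Betwixt-finiteness for translates of an H-wall) Let G be a group, H ≤ G a subgroup, and let {U, V} be a pair of subsets of G with G = U ∪ V, which is H-invariant ({hU, hV} = {U, V} for all h ∈ H), and such that U ∩ V ⊆ H·F for some finite subset F ⊆ G. Then for each x ∈ G, the set of unordered pairs of subsets {g⁻¹U, g⁻¹V}, ranging over g ∈ G, such that x ∈ g⁻¹U ∩ g⁻¹V (i.e., x betwixts the wall g⁻¹{U, V}) is finite. -/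
open Pointwise

/-- **Betwixt-finiteness for translates of an `H`-wall.**  Let `{U, V}` be a pair of subsets
of a group `G` with `G = U ∪ V`, `H`-invariant, and with `U ∩ V ⊆ H·F` for a finite `F`.
Then for each `x ∈ G`, only finitely many of the translated walls `{g⁻¹U, g⁻¹V}` (as
unordered pairs of subsets) betwixt `x`. -/
theorem betwixt_finiteness_for_translated_HWall
    {G : Type*} [Group G] (H : Subgroup G) (U V : Set G)
    (hcover : U ∪ V = Set.univ)
    (hinv : ∀ h ∈ H, (h • U = U ∧ h • V = V) ∨ (h • U = V ∧ h • V = U))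
    (F : Finset G) (hUV : U ∩ V ⊆ (H : Set G) * (F : Set G)) :
    ∀ x : G,
      {p : Set G × Set G | ∃ g : G,
        (p = (g⁻¹ • U, g⁻¹ • V) ∨ p = (g⁻¹ • V, g⁻¹ • U)) ∧
        x ∈ (g⁻¹ • U) ∩ (g⁻¹ • V)}.Finite := by
  intro x
  have hS : (((fun f : G => (((x * f⁻¹) • U, (x * f⁻¹) • V) : Set G × Set G)) '' F) ∪
      ((fun f : G => (((x * f⁻¹) • V, (x * f⁻¹) • U) : Set G × Set G)) '' F)).Finite :=
    (F.finite_toSet.image _).union (F.finite_toSet.image _)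
  refine hS.subset ?_
  rintro p ⟨g, hp, hx1, hx2⟩
  have hgx : g * x ∈ U ∩ V := by
    constructor
    · have := (Set.mem_smul_set_iff_inv_smul_mem).mp hx1
      simpa [smul_eq_mul] using this
    · have := (Set.mem_smul_set_iff_inv_smul_mem).mp hx2
      simpa [smul_eq_mul] using this
  obtain ⟨h, hh, f, hf, hhf⟩ := hUV hgx
  have hhH : h ∈ H := hh
  have hginv : g⁻¹ = x * f⁻¹ * h⁻¹ := by
    have hg : g = h * f * x⁻¹ := by
      have : g * x = h * f := hhf.symm
      group
      rw [← this]
      group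
    rw [hg]; group
  have hU : g⁻¹ • U = (x * f⁻¹) • (h⁻¹ • U) := by
    rw [hginv, mul_smul]
  have hV : g⁻¹ • V = (x * f⁻¹) • (h⁻¹ • V) := by
    rw [hginv, mul_smul]
  rcases hinv h⁻¹ (inv_mem hhH) with ⟨h1, h2⟩ | ⟨h1, h2⟩ <;>
    rcases hp with rfl | rfl
  · exact Or.inl ⟨f, hf, by rw [hU, hV, h1, h2]⟩
  · exact Or.inr ⟨f, hf, by rw [hU, hV, h1, h2]⟩
  · exact Or.inr ⟨f, hf, by rw [hU, hV, h1, h2]⟩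
  · exact Or.inl ⟨f, hf, by rw [hU, hV, h1, h2]⟩
end

section
/- (Separation-finiteness for translates of an H-wall) Let G be a group with finite generating set S, H ≤ G a subgroup, and let {U, V} be a pair of subsets of G with G = U ∪ V which is H-invariant ({hU, hV} = {U, V} for all h ∈ H). Let Ḧ = {h ∈ H : hU = U and hV = V}, and suppose the frontier of U with respect to S is contained in Ḧ·F for some finite F ⊆ G. Then for all x, y ∈ G, the set of unordered pairs of subsets {g⁻¹U, g⁻¹V}, ranging over g ∈ G, such that the wall g⁻¹{U, V} separates x and y (x and y lie in distinct open halfspaces g⁻¹U ∖ (g⁻¹U ∩ g⁻¹V) and g⁻¹V ∖ (g⁻¹U ∩ g⁻¹V)) is finite. -/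
open Pointwise

/-- Crossing lemma: if `a ∈ A` but `a * l.prod ∉ A` where `l` consists of generators or
their inverses, then some prefix point lies in the frontier of `A`. -/
lemma frontier_crossing {G : Type*} [Group G] (S : Finset G) (A : Set G) :
    ∀ (l : List G), (∀ s ∈ l, s ∈ S ∨ s⁻¹ ∈ S) → ∀ a : G, a ∈ A → a * l.prod ∉ A →
      ∃ t ∈ l.inits, a * t.prod ∈ frontierIn S A := by
  intro l
  induction l with
  | nil => intro _ a ha hna; simp only [List.prod_nil, mul_one] at hna; exact absurd ha hna
  | cons s l ih =>
    intro hl a ha hna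
    by_cases hs : a * s ∈ A
    · obtain ⟨t, ht, hft⟩ := ih (fun x hx => hl x (List.mem_cons_of_mem _ hx)) (a * s) hs
        (by rwa [mul_assoc, ← List.prod_cons])
      refine ⟨s :: t, ?_, ?_⟩
      · rw [List.mem_inits] at ht ⊢
        exact List.cons_prefix_cons.mpr ⟨rfl, ht⟩
      · rwa [List.prod_cons, ← mul_assoc]
    · exact ⟨[], by simp, ⟨by simpa using ha, s, hl s List.mem_cons_self, by simpa using hs⟩⟩

/-- Every group element is a product of a list of generators or inverses of generators. -/
lemma exists_word {G : Type*} [Group G] (S : Finset G)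
    (hS : Subgroup.closure (S : Set G) = ⊤) (w : G) :
    ∃ l : List G, (∀ s ∈ l, s ∈ S ∨ s⁻¹ ∈ S) ∧ l.prod = w := by
  have hw : w ∈ Submonoid.closure ((S : Set G) ∪ (S : Set G)⁻¹) := by
    rw [← Subgroup.closure_toSubmonoid, hS]; trivial
  obtain ⟨l, hl, hprod⟩ := Submonoid.exists_list_of_mem_closure hw
  refine ⟨l, fun s hs => ?_, hprod⟩
  rcases hl s hs with h | h
  · exact Or.inl h
  · exact Or.inr (Set.mem_inv.mp h)

/-- **Separation-finiteness for translates of an `H`-wall.**  Let `G` have finite generating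
set `S`, let `{U, V}` cover `G` and be `H`-invariant, and suppose the frontier of `U` is
`Ḧ`-finite, where `Ḧ = {h ∈ H : hU = U ∧ hV = V}`.  Then for all `x, y ∈ G`, only finitely
many of the translated walls `{g⁻¹U, g⁻¹V}` (as unordered pairs of subsets) separate `x`
from `y`. -/
theorem separation_finiteness_for_translated_HWall
    {G : Type*} [Group G]
    (S : Finset G) (hS : Subgroup.closure (S : Set G) = ⊤)
    (H : Subgroup G) (U V : Set G)
    (hcover : U ∪ V = Set.univ)
    (hinv : ∀ h ∈ H, (h • U = U ∧ h • V = V) ∨ (h • U = V ∧ h • V = U))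
    (F : Finset G)
    (hfr : frontierIn S U ⊆ {h : G | h ∈ H ∧ h • U = U ∧ h • V = V} * (F : Set G)) :
    ∀ x y : G,
      {p : Set G × Set G | ∃ g : G,
        (p = (g⁻¹ • U, g⁻¹ • V) ∨ p = (g⁻¹ • V, g⁻¹ • U)) ∧
        ((x ∈ (g⁻¹ • U) \ (g⁻¹ • V) ∧ y ∈ (g⁻¹ • V) \ (g⁻¹ • U)) ∨
         (x ∈ (g⁻¹ • V) \ (g⁻¹ • U) ∧ y ∈ (g⁻¹ • U) \ (g⁻¹ • V)))}.Finite := by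
  classical
  intro x y
  obtain ⟨l₁, hl₁, hp₁⟩ := exists_word S hS (x⁻¹ * y)
  obtain ⟨l₂, hl₂, hp₂⟩ := exists_word S hS (y⁻¹ * x)
  -- the finite set of possible "crossing points"
  set P : Set G :=
    ((fun t : List G => x * t.prod) '' {t | t ∈ l₁.inits}) ∪
    ((fun t : List G => y * t.prod) '' {t | t ∈ l₂.inits}) with hP
  have hPfin : P.Finite := by
    apply Set.Finite.union <;> exact (List.finite_toSet _).image _
  -- the target finite superset
  have hbig : (((fun q : G × G => (((q.1 * q.2⁻¹) • U, (q.1 * q.2⁻¹) • V) : Set G × Set G)) ''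
        (P ×ˢ (F : Set G))) ∪
      ((fun q : G × G => (((q.1 * q.2⁻¹) • V, (q.1 * q.2⁻¹) • U) : Set G × Set G)) ''
        (P ×ˢ (F : Set G)))).Finite :=
    Set.Finite.union ((hPfin.prod F.finite_toSet).image _) ((hPfin.prod F.finite_toSet).image _)
  refine hbig.subset ?_
  rintro p ⟨g, hpair, hsep⟩
  -- key claim: g⁻¹ • U and g⁻¹ • V are translates by q * f⁻¹ with q ∈ P, f ∈ F
  have key : ∃ q ∈ P, ∃ f ∈ (F : Set G), g⁻¹ • U = (q * f⁻¹) • U ∧ g⁻¹ • V = (q * f⁻¹) • V := by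
    have main : ∀ (a b : G) (la : List G), (∀ s ∈ la, s ∈ S ∨ s⁻¹ ∈ S) → la.prod = a⁻¹ * b →
        a ∈ g⁻¹ • U → b ∉ g⁻¹ • U →
        ∃ t ∈ la.inits, g * (a * t.prod) ∈ frontierIn S U := by
      intro a b la hla hprod ha hb
      have ha' : g * a ∈ U := by
        rwa [Set.mem_smul_set_iff_inv_smul_mem, inv_inv, smul_eq_mul] at ha
      have hb' : g * a * la.prod ∉ U := by
        rw [hprod, mul_assoc, mul_inv_cancel_left]
        intro hmem
        exact hb (by rwa [Set.mem_smul_set_iff_inv_smul_mem, inv_inv, smul_eq_mul])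
      obtain ⟨t, ht, hft⟩ := frontier_crossing S U la hla (g * a) ha' hb'
      exact ⟨t, ht, by rwa [← mul_assoc]⟩
    have step : ∃ q ∈ P, g * q ∈ frontierIn S U := by
      rcases hsep with ⟨hx, hy⟩ | ⟨hx, hy⟩
      · obtain ⟨t, ht, hft⟩ := main x y l₁ hl₁ hp₁ hx.1 hy.2
        exact ⟨x * t.prod, Or.inl ⟨t, ht, rfl⟩, hft⟩
      · obtain ⟨t, ht, hft⟩ := main y x l₂ hl₂ hp₂ hy.1 hx.2
        exact ⟨y * t.prod, Or.inr ⟨t, ht, rfl⟩, hft⟩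
    obtain ⟨q, hq, hfr'⟩ := step
    obtain ⟨h, hh, f, hf, hhf⟩ := hfr hfr'
    have hhf' : h * f = g * q := hhf
    obtain ⟨hhH, hhU, hhV⟩ := hh
    have hg : g⁻¹ = q * f⁻¹ * h⁻¹ := by
      have : g = h * f * q⁻¹ := by rw [hhf']; group
      rw [this]; group
    have hU' : h⁻¹ • U = U := by rw [inv_smul_eq_iff, hhU]
    have hV' : h⁻¹ • V = V := by rw [inv_smul_eq_iff, hhV]
    refine ⟨q, hq, f, hf, ?_, ?_⟩
    · rw [hg, mul_smul, hU']
    · rw [hg, mul_smul, hV']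
  obtain ⟨q, hq, f, hf, hU2, hV2⟩ := key
  rcases hpair with rfl | rfl
  · exact Or.inl ⟨(q, f), ⟨hq, hf⟩, by dsimp only; rw [← hU2, ← hV2]⟩
  · exact Or.inr ⟨(q, f), ⟨hq, hf⟩, by dsimp only; rw [← hU2, ← hV2]⟩
end
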